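/- Let M and M′ be N×N Hermitian matrices with ‖M − M′‖ ≤ f in operator norm, let ρ ∈ ℝ, δ₀ > 0, and let n ≥ 0, k ≥ 1 with n + k ≤ N. Suppose that every eigenvalue λ_i(M′) with i ∉ {n+1,…,n+k} satisfies |λ_i(M′) − ρ| > δ₀/2. Let E be the subspace of ℂ^N spanned by an orthonormal family of eigenvectors of M′ associated with the eigenvalues λ_{n+1}(M′),…,λ_{n+k}(M′). Then every unit eigenvector ξ of M associated with the eigenvalue λ_{n+l}(M), for some 1 ≤ l ≤ k, satisfies ‖P_{E^⊥} ξ‖₂ ≤ (2/δ₀) ( f + |λ_{n+l}(M) − ρ| ). -/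

import Mathlib

open Matrix

/-- Eigenvalues of a Hermitian matrix in decreasing order (junk value `0` otherwise),
indexed by `Fin N`. -/
noncomputable def eigsDesc {N : ℕ} (A : Matrix (Fin N) (Fin N) ℂ) : Fin N → ℝ :=
  if h : A.IsHermitian then fun i => (h.eigenvalues ∘ Tuple.sort h.eigenvalues) i.rev
  else 0

/-- `eigVal A q` is the `q`-th largest eigenvalue of `A` (`1`-based indexing `λ_1 ≥ … ≥ λ_N`). -/
noncomputable def eigVal {N : ℕ} (A : Matrix (Fin N) (Fin N) ℂ) (q : ℕ) : ℝ :=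
  if h : q - 1 < N then eigsDesc A ⟨q - 1, h⟩ else 0

/-- Operator norm of a complex matrix, viewed as an operator on Euclidean space. -/
noncomputable def opNorm {N : ℕ} (M : Matrix (Fin N) (Fin N) ℂ) : ℝ :=
  ‖(Matrix.toEuclideanCLM (𝕜 := ℂ) M : EuclideanSpace ℂ (Fin N) →L[ℂ] EuclideanSpace ℂ (Fin N))‖

set_option maxHeartbeats 1000000 in
/-- Lemma `evProj`: if the eigenvalues of `M'` outside the window
`λ_{n+1},…,λ_{n+k}` stay at distance `> δ₀/2` from `ρ`, and `E` is spanned by an orthonormal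
family of eigenvectors of `M'` for `λ_{n+1}(M'),…,λ_{n+k}(M')`, then any unit eigenvector `ξ`
of `M` for `λ_{n+l}(M)` satisfies
`‖P_{E^⊥} ξ‖ ≤ (2/δ₀)(f + |λ_{n+l}(M) − ρ|)`, provided `‖M − M'‖ ≤ f`. -/
theorem statement5 {N : ℕ} (M M' : Matrix (Fin N) (Fin N) ℂ)
    (hM : M.IsHermitian) (hM' : M'.IsHermitian)
    (f : ℝ) (hf : opNorm (M - M') ≤ f)
    (ρ : ℝ) (δ₀ : ℝ) (hδ₀ : 0 < δ₀)
    (n k : ℕ) (hk : 1 ≤ k) (hnk : n + k ≤ N)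
    (hgap : ∀ i : ℕ, 1 ≤ i → i ≤ N → (i < n + 1 ∨ n + k < i) → δ₀ / 2 < |eigVal M' i - ρ|)
    (v : Fin k → EuclideanSpace ℂ (Fin N)) (hv : Orthonormal ℂ v)
    (hveig : ∀ i : Fin k,
      Matrix.toEuclideanLin M' (v i) = (eigVal M' (n + i.val + 1) : ℂ) • v i)
    (l : ℕ) (hl1 : 1 ≤ l) (hlk : l ≤ k)
    (ξ : EuclideanSpace ℂ (Fin N)) (hξ : ‖ξ‖ = 1)
    (hξeig : Matrix.toEuclideanLin M ξ = (eigVal M (n + l) : ℂ) • ξ) :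
    ‖(Submodule.orthogonalProjectionOnto (Submodule.span ℂ (Set.range v))ᗮ ξ : EuclideanSpace ℂ (Fin N))‖
      ≤ (2 / δ₀) * (f + |eigVal M (n + l) - ρ|) := by
  classical
  set E : Submodule ℂ (EuclideanSpace ℂ (Fin N)) := Submodule.span ℂ (Set.range v) with hE
  set T : EuclideanSpace ℂ (Fin N) →ₗ[ℂ] EuclideanSpace ℂ (Fin N) := Matrix.toEuclideanLin M'
    with hT
  have hsymm : T.IsSymmetric := (isHermitian_iff_isSymmetric).1 hM'
  set u : OrthonormalBasis (Fin N) ℂ (EuclideanSpace ℂ (Fin N)) := hM'.eigenvectorBasis with hu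
  set γ : Fin N → ℝ := hM'.eigenvalues with hγ
  set w : EuclideanSpace ℂ (Fin N) :=
    (Submodule.orthogonalProjectionOnto Eᗮ ξ : EuclideanSpace ℂ (Fin N)) with hw
  set p : EuclideanSpace ℂ (Fin N) :=
    (Submodule.orthogonalProjectionOnto E ξ : EuclideanSpace ℂ (Fin N)) with hp
  set lam : ℝ := eigVal M (n + l) with hlam
  -- eigsDesc formula
  have hdesc : ∀ i : Fin N, eigsDesc M' i = γ (Tuple.sort γ i.rev) := by
    intro i; rw [eigsDesc, dif_pos hM']; rfl
  have hEigVal : ∀ j : Fin N, eigVal M' (j.val + 1) = eigsDesc M' j := by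
    intro j
    have hj : j.val + 1 - 1 < N := by simpa using j.isLt
    rw [eigVal, dif_pos hj]
    congr 1
  -- T acts on basis
  have hTu : ∀ j : Fin N, T (u j) = (γ j : ℂ) • u j := by
    intro j
    have h1 : T (u j) = (WithLp.equiv 2 _).symm (M' *ᵥ ⇑(u j)) := rfl
    rw [h1, hM'.mulVec_eigenvectorBasis]
    ext i
    simp [hu, hγ, Complex.real_smul]
  -- w ∈ Eᗮ, basic orthogonality
  have hwmem : w ∈ Eᗮ := SetLike.coe_mem _
  have hvw : ∀ i : Fin k, (inner ℂ (v i) w : ℂ) = 0 := by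
    intro i
    exact (Submodule.mem_orthogonal E w).1 hwmem (v i)
      (Submodule.subset_span (Set.mem_range_self i))
  -- key claim: bad basis vectors lie in E
  have hkey : ∀ j : Fin N, |γ j - ρ| ≤ δ₀ / 2 → u j ∈ E := by
    intro j hbad
    set μ : ℝ := γ j with hμ
    -- index sets
    set T' : Finset (Fin N) := Finset.univ.filter (fun t => γ t = μ) with hT'
    set D : Finset (Fin N) := Finset.univ.filter (fun t => eigsDesc M' t = μ) with hD
    set S : Finset (Fin k) := Finset.univ.filter
      (fun i : Fin k => eigVal M' (n + i.val + 1) = μ) with hS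
    -- gap restated
    have hgap' : ∀ t : Fin N, eigsDesc M' t = μ → n ≤ t.val ∧ t.val < n + k := by
      intro t ht
      by_contra hcon
      have := hgap (t.val + 1) (by omega) (by omega) (by omega)
      rw [hEigVal t, ht] at this
      linarith [abs_nonneg (μ - ρ)]
    -- card T' = card D
    have hσ : ∀ t : Fin N, eigsDesc M' t = γ (Tuple.sort γ t.rev) := hdesc
    have hcardTD : T'.card = D.card := by
      apply Finset.card_bij (fun t _ => ((Tuple.sort γ).symm t).rev)
      · intro t ht
        simp only [hD, Finset.mem_filter, Finset.mem_univ, true_and]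
        rw [hσ, Fin.rev_rev, Equiv.apply_symm_apply]
        simpa [hT'] using ht
      · intro a ha b hb hab
        exact (Tuple.sort γ).symm.injective (Fin.rev_injective hab)
      · intro t ht
        refine ⟨Tuple.sort γ t.rev, ?_, ?_⟩
        · simp only [hT', Finset.mem_filter, Finset.mem_univ, true_and]
          have := (Finset.mem_filter.1 ht).2
          rw [hσ t] at this
          exact this
        · rw [Equiv.symm_apply_apply, Fin.rev_rev]
    -- card D = card S
    have hcardDS : D.card = S.card := by
      apply Finset.card_bij (fun t ht => (⟨t.val - n, by
        have := hgap' t (by simpa [hD] using (Finset.mem_filter.1 ht).2)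
        omega⟩ : Fin k))
      · intro t ht
        have ht' : eigsDesc M' t = μ := by simpa [hD] using (Finset.mem_filter.1 ht).2
        have hb := hgap' t ht'
        simp only [hS, Finset.mem_filter, Finset.mem_univ, true_and]
        have hlt : n + (t.val - n) + 1 - 1 < N := by omega
        have : (⟨n + (t.val - n), by omega⟩ : Fin N) = t := by
          apply Fin.ext; simp; omega
        rw [eigVal, dif_pos hlt]
        rw [show (⟨n + (t.val - n) + 1 - 1, hlt⟩ : Fin N) = t by apply Fin.ext; simp; omega]
        exact ht'
      · intro a ha b hb hab
        have ha' := hgap' a (by simpa [hD] using (Finset.mem_filter.1 ha).2)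
        have hb' := hgap' b (by simpa [hD] using (Finset.mem_filter.1 hb).2)
        have := congrArg Fin.val hab
        simp at this
        apply Fin.ext; omega
      · intro i hi
        have hi' : eigVal M' (n + i.val + 1) = μ := by simpa [hS] using (Finset.mem_filter.1 hi).2
        have hlt : n + i.val < N := by have := i.isLt; omega
        refine ⟨⟨n + i.val, hlt⟩, ?_, ?_⟩
        · simp only [hD, Finset.mem_filter, Finset.mem_univ, true_and]
          rw [← hEigVal ⟨n + i.val, hlt⟩]
          simpa using hi'
        · apply Fin.ext; simp
    -- eigenspace of μ
    set K : Submodule ℂ (EuclideanSpace ℂ (Fin N)) :=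
      Module.End.eigenspace T (μ : ℂ) with hK
    set W : Submodule ℂ (EuclideanSpace ℂ (Fin N)) :=
      Submodule.span ℂ (v '' ↑S) with hW
    have hWK : W ≤ K := by
      rw [hW, Submodule.span_le]
      rintro _ ⟨i, hi, rfl⟩
      have hi' : eigVal M' (n + i.val + 1) = μ := by
        simpa [hS] using (Finset.mem_coe.1 hi)
      rw [SetLike.mem_coe, Module.End.mem_eigenspace_iff, hveig i, hi']
    have hKle : K ≤ Submodule.span ℂ (u '' ↑T') := by
      intro x hx
      have hx' : T x = (μ : ℂ) • x := Module.End.mem_eigenspace_iff.1 hx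
      have hcoef : ∀ t : Fin N, t ∉ T' → (inner ℂ (u t) x : ℂ) = 0 := by
        intro t ht
        have h1 : (inner ℂ (u t) (T x) : ℂ) = inner ℂ (T (u t)) x := (hsymm (u t) x).symm
        rw [hx', inner_smul_right, hTu t, inner_smul_left, Complex.conj_ofReal] at h1
        have hne : (γ t : ℂ) ≠ (μ : ℂ) := by
          have : γ t ≠ μ := by simpa [hT'] using ht
          exact_mod_cast fun hc => this (by exact_mod_cast hc)
        have := sub_eq_zero.2 h1
        rw [← sub_mul] at this
        rcases mul_eq_zero.1 this with h | h
        · exact (hne (sub_eq_zero.1 h).symm).elim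
        · exact h
      have hxeq : x = ∑ t, (inner ℂ (u t) x : ℂ) • u t := (u.sum_repr' x).symm
      rw [hxeq]
      apply Submodule.sum_mem
      intro t _
      by_cases ht : t ∈ T'
      · exact Submodule.smul_mem _ _
          (Submodule.subset_span ⟨t, Finset.mem_coe.2 ht, rfl⟩)
      · rw [hcoef t ht, zero_smul]; exact Submodule.zero_mem _
    have hfinW : Module.finrank ℂ W = S.card := by
      have hli : LinearIndependent ℂ (fun i : {i // i ∈ S} => v i) :=
        hv.linearIndependent.comp _ Subtype.coe_injective
      have hr : Set.range (fun i : {i // i ∈ S} => v i) = v '' ↑S := by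
        rw [show (fun i : {i // i ∈ S} => v i) = v ∘ ((↑) : {i // i ∈ S} → Fin k) from rfl,
          Set.range_comp, Subtype.range_coe]
      rw [hW, ← hr, finrank_span_eq_card hli, Fintype.card_coe]
    have hfinKT : Module.finrank ℂ (Submodule.span ℂ (u '' ↑T')) = T'.card := by
      have hli : LinearIndependent ℂ (fun t : {t // t ∈ T'} => u t) :=
        (u.orthonormal.comp _ Subtype.coe_injective).linearIndependent
      have hr : Set.range (fun t : {t // t ∈ T'} => u t) = u '' ↑T' := by
        rw [show (fun t : {t // t ∈ T'} => u t) = u ∘ ((↑) : {t // t ∈ T'} → Fin N) from rfl,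
          Set.range_comp, Subtype.range_coe]
      rw [← hr, finrank_span_eq_card hli, Fintype.card_coe]
    have hWKeq : W = K := by
      apply Submodule.eq_of_le_of_finrank_le hWK
      calc Module.finrank ℂ K ≤ Module.finrank ℂ (Submodule.span ℂ (u '' ↑T')) :=
            Submodule.finrank_mono hKle
        _ = T'.card := hfinKT
        _ = S.card := by rw [hcardTD, hcardDS]
        _ = Module.finrank ℂ W := hfinW.symm
    have hujK : u j ∈ K := by
      rw [hK, Module.End.mem_eigenspace_iff, hTu j]
    have hWE : W ≤ E := by
      rw [hW, hE, Submodule.span_le]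
      rintro _ ⟨i, _, rfl⟩
      exact Submodule.subset_span (Set.mem_range_self i)
    exact hWE (hWKeq ▸ hujK)
  -- coefficients of w vanish on bad indices
  have hcw : ∀ j : Fin N, |γ j - ρ| ≤ δ₀ / 2 → (inner ℂ (u j) w : ℂ) = 0 := fun j hj =>
    (Submodule.mem_orthogonal E w).1 hwmem _ (hkey j hj)
  -- the vector y
  set y : EuclideanSpace ℂ (Fin N) := T w - (ρ : ℂ) • w with hy
  have hyrepr : ∀ j : Fin N,
      (inner ℂ (u j) y : ℂ) = ((γ j - ρ : ℝ) : ℂ) * inner ℂ (u j) w := by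
    intro j
    rw [hy, inner_sub_right, inner_smul_right, ← hsymm (u j) w, hTu j, inner_smul_left,
      Complex.conj_ofReal]
    push_cast
    ring
  have hnorm2 : ∀ x : EuclideanSpace ℂ (Fin N),
      ‖x‖ ^ 2 = ∑ j, ‖(inner ℂ (u j) x : ℂ)‖ ^ 2 := by
    intro x
    rw [← u.repr.norm_map x, EuclideanSpace.norm_eq, Real.sq_sqrt
      (Finset.sum_nonneg fun _ _ => sq_nonneg _)]
    exact Finset.sum_congr rfl fun j _ => by rw [u.repr_apply_apply]
  have hlow : (δ₀ / 2) * ‖w‖ ≤ ‖y‖ := by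
    have hsq : ((δ₀ / 2) * ‖w‖) ^ 2 ≤ ‖y‖ ^ 2 := by
      rw [mul_pow, hnorm2 y, hnorm2 w, Finset.mul_sum]
      apply Finset.sum_le_sum
      intro j _
      by_cases hj : |γ j - ρ| ≤ δ₀ / 2
      · rw [hcw j hj]
        simp
      · push_neg at hj
        rw [hyrepr j, norm_mul, mul_pow]
        have h1 : ‖((γ j - ρ : ℝ) : ℂ)‖ = |γ j - ρ| := by
          rw [Complex.norm_real, Real.norm_eq_abs]
        rw [h1]
        have h2 : (δ₀ / 2) ^ 2 ≤ |γ j - ρ| ^ 2 := by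
          apply pow_le_pow_left₀ (by positivity) hj.le
        exact mul_le_mul_of_nonneg_right h2 (sq_nonneg _)
    have := Real.sqrt_le_sqrt hsq
    rwa [Real.sqrt_sq (by positivity), Real.sqrt_sq (norm_nonneg _)] at this
  have hymem : y ∈ Eᗮ := by
    rw [Submodule.mem_orthogonal]
    intro x hx
    rw [hE] at hx
    induction hx using Submodule.span_induction with
    | mem x hx =>
      obtain ⟨i, rfl⟩ := hx
      rw [hy, inner_sub_right, inner_smul_right, ← hsymm (v i) w, hveig i, inner_smul_left,
        Complex.conj_ofReal, hvw i]
      ring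
    | zero => simp
    | add x z _ _ hx hz => rw [inner_add_left, hx, hz, add_zero]
    | smul c x _ hx => rw [inner_smul_left, hx, mul_zero]
  have hTE : ∀ x ∈ E, T x ∈ E := by
    intro x hx
    rw [hE] at hx ⊢
    induction hx using Submodule.span_induction with
    | mem x hx =>
      obtain ⟨i, rfl⟩ := hx
      rw [hveig i]
      exact Submodule.smul_mem _ _ (Submodule.subset_span (Set.mem_range_self i))
    | zero => simp
    | add x z _ _ hx hz => rw [map_add]; exact Submodule.add_mem _ hx hz
    | smul c x _ hx => rw [_root_.map_smul]; exact Submodule.smul_mem _ _ hx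
  set e : EuclideanSpace ℂ (Fin N) := T p - (ρ : ℂ) • p with he
  have hemem : e ∈ E := by
    rw [he]
    exact Submodule.sub_mem _ (hTE p (SetLike.coe_mem _))
      (Submodule.smul_mem _ _ (SetLike.coe_mem _))
  have hsum : e + y = T ξ - (ρ : ℂ) • ξ := by
    have hξ' : p + w = ξ := by
      rw [hp, hw]
      exact E.starProjection_add_starProjection_orthogonal ξ
    rw [he, hy, ← hξ', map_add, smul_add]
    abel
  have hyle : ‖y‖ ≤ ‖T ξ - (ρ : ℂ) • ξ‖ := by
    rw [← hsum]
    have horth : (inner ℂ e y : ℂ) = 0 := (Submodule.mem_orthogonal E y).1 hymem e hemem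
    have := norm_add_sq_eq_norm_sq_add_norm_sq_of_inner_eq_zero e y horth
    have h2 : ‖y‖ ^ 2 ≤ ‖e + y‖ ^ 2 := by
      rw [pow_two, pow_two, this]
      have h0 := mul_self_nonneg ‖e‖
      linarith
    have := Real.sqrt_le_sqrt h2
    rwa [Real.sqrt_sq (norm_nonneg _), Real.sqrt_sq (norm_nonneg _)] at this
  have hup : ‖T ξ - (ρ : ℂ) • ξ‖ ≤ f + |lam - ρ| := by
    have h1 : T ξ - (ρ : ℂ) • ξ
        = Matrix.toEuclideanLin (M' - M) ξ + ((lam - ρ : ℝ) : ℂ) • ξ := by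
      rw [map_sub (Matrix.toEuclideanLin (𝕜 := ℂ) (m := Fin N) (n := Fin N))]
      rw [LinearMap.sub_apply, hξeig, hT]
      push_cast
      module
    rw [h1]
    apply (norm_add_le _ _).trans
    have h2 : ‖Matrix.toEuclideanLin (M' - M) ξ‖ ≤ f := by
      have heq : Matrix.toEuclideanLin (M' - M) ξ
          = (Matrix.toEuclideanCLM (𝕜 := ℂ) (M' - M)) ξ := by
        rw [← Matrix.coe_toEuclideanCLM_eq_toEuclideanLin]
        rfl
      rw [heq]
      calc ‖(Matrix.toEuclideanCLM (𝕜 := ℂ) (M' - M)) ξ‖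
          ≤ ‖(Matrix.toEuclideanCLM (𝕜 := ℂ) (M' - M) : EuclideanSpace ℂ (Fin N) →L[ℂ]
              EuclideanSpace ℂ (Fin N))‖ * ‖ξ‖ := ContinuousLinearMap.le_opNorm _ _
        _ = opNorm (M - M') := by
            rw [hξ, mul_one, opNorm]
            rw [show M' - M = -(M - M') from (neg_sub M M').symm, map_neg, norm_neg]
        _ ≤ f := hf
    have h3 : ‖((lam - ρ : ℝ) : ℂ) • ξ‖ = |lam - ρ| := by
      rw [norm_smul, hξ, mul_one, Complex.norm_real, Real.norm_eq_abs]
    rw [h3]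
    exact add_le_add h2 le_rfl
  -- conclude
  have hfinal : (δ₀ / 2) * ‖w‖ ≤ f + |lam - ρ| := hlow.trans (hyle.trans hup)
  have hw2 : ‖w‖ ≤ (f + |lam - ρ|) / (δ₀ / 2) := (le_div_iff₀' (by positivity)).2 hfinal
  have hscal : (f + |lam - ρ|) / (δ₀ / 2) = (2 / δ₀) * (f + |lam - ρ|) := by
    field_simp
  exact hscal ▸ hw2
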